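/- Let M ∈ ℝ_{≥0}^{R1×R2} be a cost matrix, ε > 0, and let μ ∈ P_{R1}, ν ∈ P_{R2} be probability vectors with strictly positive entries. Then strong duality holds for entropy-regularized optimal transport: min_{T ∈ Π(μ,ν)} ⟨T,M⟩ − ε H(T) = max_{α ∈ ℝ^{R1}, β ∈ ℝ^{R2}} αᵀμ + βᵀν − ε Σ_{m,n} exp((α_m + β_n − M_{mn})/ε), and the maximum on the right-hand side is attained. -/

import Mathlib

noncomputable section

open Finset

/-- The probability simplex in `ℝ^R`. -/
def probSimplex (R : ℕ) : Set (Fin R → ℝ) :=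
  {p | (∀ r, 0 ≤ p r) ∧ ∑ r, p r = 1}

/-- The transport polytope `Π(μ, ν)`. -/
def transportPolytope {R1 R2 : ℕ} (μ : Fin R1 → ℝ) (ν : Fin R2 → ℝ) :
    Set (Matrix (Fin R1) (Fin R2) ℝ) :=
  {T | (∀ m n, 0 ≤ T m n) ∧ (∀ m, ∑ n, T m n = μ m) ∧ (∀ n, ∑ m, T m n = ν n)}

/-- The entropy `H(T) = -∑ T_{mn} (log T_{mn} - 1)` (with `0 log 0 = 0`,
which is Mathlib's convention since `Real.log 0 = 0`). -/
def entropyH {R1 R2 : ℕ} (T : Matrix (Fin R1) (Fin R2) ℝ) : ℝ :=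
  -∑ m, ∑ n, T m n * (Real.log (T m n) - 1)

/-- The entropy-regularized transport objective `⟨T, M⟩ - ε H(T)`. -/
def otObj {R1 R2 : ℕ} (M : Matrix (Fin R1) (Fin R2) ℝ) (ε : ℝ)
    (T : Matrix (Fin R1) (Fin R2) ℝ) : ℝ :=
  (∑ m, ∑ n, T m n * M m n) - ε * entropyH T

/-- The dual objective `αᵀμ + βᵀν - ε ∑_{m,n} exp((α_m + β_n - M_{mn})/ε)`. -/
def dualObj {R1 R2 : ℕ} (M : Matrix (Fin R1) (Fin R2) ℝ) (ε : ℝ)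
    (μ : Fin R1 → ℝ) (ν : Fin R2 → ℝ) (α : Fin R1 → ℝ) (β : Fin R2 → ℝ) : ℝ :=
  (∑ m, α m * μ m) + (∑ n, β n * ν n)
    - ε * ∑ m, ∑ n, Real.exp ((α m + β n - M m n) / ε)

section EOTAux
variable {R1 R2 : ℕ}


lemma exp_lin_le (x y : ℝ) : Real.exp x * (1 + (y - x)) ≤ Real.exp y := by
  have h := Real.add_one_le_exp (y - x)
  have h2 : Real.exp x * ((y - x) + 1) ≤ Real.exp x * Real.exp (y - x) :=
    mul_le_mul_of_nonneg_left h (Real.exp_pos x).le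
  rw [← Real.exp_add] at h2
  calc Real.exp x * (1 + (y - x)) = Real.exp x * ((y - x) + 1) := by ring
    _ ≤ Real.exp (x + (y - x)) := h2
    _ = Real.exp y := by rw [show x + (y - x) = y by ring]

lemma gibbs_pt {t s : ℝ} (ht : 0 ≤ t) (hs : 0 < s) :
    t * Real.log s - s ≤ t * (Real.log t - 1) := by
  rcases eq_or_lt_of_le ht with h | h
  · simp [← h]; linarith
  · have h1 := Real.log_le_sub_one_of_pos (div_pos hs h)
    rw [Real.log_div hs.ne' h.ne'] at h1
    have h2 := mul_le_mul_of_nonneg_left h1 h.le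
    have h3 : t * (s / t - 1) = s - t := by field_simp
    nlinarith

lemma sum_lin (α : Fin R1 → ℝ) (β : Fin R2 → ℝ) (μ : Fin R1 → ℝ) (ν : Fin R2 → ℝ)
    (S : Matrix (Fin R1) (Fin R2) ℝ)
    (hrow : ∀ m, ∑ n, S m n = μ m) (hcol : ∀ n, ∑ m, S m n = ν n) :
    ∑ m, ∑ n, (α m + β n) * S m n = (∑ m, α m * μ m) + (∑ n, β n * ν n) := by
  have h1 : ∑ m, ∑ n, α m * S m n = ∑ m, α m * μ m :=
    Finset.sum_congr rfl fun m _ => by rw [← Finset.mul_sum, hrow m]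
  have h2 : ∑ m, ∑ n, β n * S m n = ∑ n, β n * ν n := by
    rw [Finset.sum_comm]
    exact Finset.sum_congr rfl fun n _ => by rw [← Finset.mul_sum, hcol n]
  calc ∑ m, ∑ n, (α m + β n) * S m n
      = ∑ m, ∑ n, (α m * S m n + β n * S m n) :=
        Finset.sum_congr rfl fun m _ => Finset.sum_congr rfl fun n _ => by ring
    _ = (∑ m, ∑ n, α m * S m n) + (∑ m, ∑ n, β n * S m n) := by
        simp [Finset.sum_add_distrib]
    _ = _ := by rw [h1, h2]

lemma otObj_expand (M : Matrix (Fin R1) (Fin R2) ℝ) (ε : ℝ) (T : Matrix (Fin R1) (Fin R2) ℝ) :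
    otObj M ε T = ∑ m, ∑ n, (T m n * M m n + ε * (T m n * (Real.log (T m n) - 1))) := by
  simp only [otObj, entropyH, Finset.sum_add_distrib, ← Finset.mul_sum]
  ring

lemma conclusion_of_potentials (M : Matrix (Fin R1) (Fin R2) ℝ) {ε : ℝ} (hε : 0 < ε)
    (μ : Fin R1 → ℝ) (ν : Fin R2 → ℝ) (hμ1 : ∑ m, μ m = 1)
    (α : Fin R1 → ℝ) (β : Fin R2 → ℝ)
    (hrow : ∀ m, ∑ n, Real.exp ((α m + β n - M m n) / ε) = μ m)
    (hcol : ∀ n, ∑ m, Real.exp ((α m + β n - M m n) / ε) = ν n) :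
    (∀ (α' : Fin R1 → ℝ) (β' : Fin R2 → ℝ),
        dualObj M ε μ ν α' β' ≤ dualObj M ε μ ν α β) ∧
      IsLeast {c | ∃ T ∈ transportPolytope μ ν, c = otObj M ε T}
        (dualObj M ε μ ν α β) := by
  set T : Matrix (Fin R1) (Fin R2) ℝ := Matrix.of fun m n => Real.exp ((α m + β n - M m n) / ε)
    with hT
  have hTapp : ∀ m n, T m n = Real.exp ((α m + β n - M m n) / ε) := fun m n => rfl
  have hTpos : ∀ m n, 0 < T m n := fun m n => Real.exp_pos _
  have hTrow : ∀ m, ∑ n, T m n = μ m := hrow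
  have hTcol : ∀ n, ∑ m, T m n = ν n := hcol
  have hTsum : ∑ m, ∑ n, T m n = 1 := by
    rw [Finset.sum_congr rfl fun m _ => hTrow m]; exact hμ1
  have hTlog : ∀ m n, Real.log (T m n) = (α m + β n - M m n) / ε := fun m n => Real.log_exp _
  -- value of the dual objective at (α, β)
  have hdval : dualObj M ε μ ν α β = (∑ m, α m * μ m) + (∑ n, β n * ν n) - ε := by
    have : ∑ m, ∑ n, Real.exp ((α m + β n - M m n) / ε) = 1 := hTsum
    simp only [dualObj, this, mul_one]
  -- the Gibbs plan achieves the dual value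
  have hval : otObj M ε T = dualObj M ε μ ν α β := by
    rw [otObj_expand, hdval]
    have hentry : ∀ m n, T m n * M m n + ε * (T m n * (Real.log (T m n) - 1))
        = (α m + β n) * T m n - ε * T m n := by
      intro m n
      rw [hTlog m n]
      field_simp
      ring
    calc ∑ m, ∑ n, (T m n * M m n + ε * (T m n * (Real.log (T m n) - 1)))
        = ∑ m, ∑ n, ((α m + β n) * T m n - ε * T m n) :=
          Finset.sum_congr rfl fun m _ => Finset.sum_congr rfl fun n _ => hentry m n
      _ = (∑ m, ∑ n, (α m + β n) * T m n) - ∑ m, ∑ n, ε * T m n := by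
          simp [Finset.sum_sub_distrib]
      _ = (∑ m, α m * μ m) + (∑ n, β n * ν n) - ε := by
          rw [sum_lin α β μ ν T hTrow hTcol]
          simp only [← Finset.mul_sum, hTsum, mul_one]
  constructor
  · -- dual optimality
    intro α' β'
    have hkey : ε * 1 + ((∑ m, (α' m - α m) * μ m) + (∑ n, (β' n - β n) * ν n))
        ≤ ε * ∑ m, ∑ n, Real.exp ((α' m + β' n - M m n) / ε) := by
      have hentry : ∀ m n, ε * T m n + ((α' m - α m) + (β' n - β n)) * T m n
          ≤ ε * Real.exp ((α' m + β' n - M m n) / ε) := by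
        intro m n
        have h1 := exp_lin_le ((α m + β n - M m n) / ε) ((α' m + β' n - M m n) / ε)
        have hyx : (α' m + β' n - M m n) / ε - (α m + β n - M m n) / ε
            = ((α' m - α m) + (β' n - β n)) / ε := by ring
        rw [hyx] at h1
        have h2 := mul_le_mul_of_nonneg_left h1 hε.le
        have h3 : ε * (T m n * (1 + ((α' m - α m) + (β' n - β n)) / ε))
            = ε * T m n + ((α' m - α m) + (β' n - β n)) * T m n := by
          rw [hTapp]
          field_simp
        rw [hTapp] at h3 ⊢
        linarith [h2, h3.le, h3.ge]
      calc ε * 1 + ((∑ m, (α' m - α m) * μ m) + (∑ n, (β' n - β n) * ν n))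
          = ε * (∑ m, ∑ n, T m n)
              + ∑ m, ∑ n, ((α' m - α m) + (β' n - β n)) * T m n := by
            rw [hTsum, sum_lin (fun m => α' m - α m) (fun n => β' n - β n) μ ν T hTrow hTcol]
        _ = ∑ m, ∑ n, (ε * T m n + ((α' m - α m) + (β' n - β n)) * T m n) := by
            simp [Finset.sum_add_distrib, Finset.mul_sum]
        _ ≤ ∑ m, ∑ n, ε * Real.exp ((α' m + β' n - M m n) / ε) :=
            Finset.sum_le_sum fun m _ => Finset.sum_le_sum fun n _ => hentry m n
        _ = ε * ∑ m, ∑ n, Real.exp ((α' m + β' n - M m n) / ε) := by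
            simp [Finset.mul_sum]
    have hs1 : ∑ m, (α' m - α m) * μ m = (∑ m, α' m * μ m) - ∑ m, α m * μ m := by
      rw [← Finset.sum_sub_distrib]
      exact Finset.sum_congr rfl fun m _ => by ring
    have hs2 : ∑ n, (β' n - β n) * ν n = (∑ n, β' n * ν n) - ∑ n, β n * ν n := by
      rw [← Finset.sum_sub_distrib]
      exact Finset.sum_congr rfl fun n _ => by ring
    rw [hdval]
    simp only [dualObj]
    linarith [hkey, hs1, hs2]
  · constructor
    · exact ⟨T, ⟨fun m n => (hTpos m n).le, hTrow, hTcol⟩, hval.symm⟩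
    · rintro c ⟨T', ⟨hT'nn, hT'row, hT'col⟩, rfl⟩
      rw [otObj_expand, hdval]
      have hentry : ∀ m n, (α m + β n) * T' m n - ε * T m n
          ≤ T' m n * M m n + ε * (T' m n * (Real.log (T' m n) - 1)) := by
        intro m n
        have hg := gibbs_pt (hT'nn m n) (hTpos m n)
        have h2 := mul_le_mul_of_nonneg_left hg hε.le
        rw [mul_sub] at h2
        have hx : ε * (T' m n * Real.log (T m n)) = T' m n * (α m + β n - M m n) := by
          rw [hTlog m n]
          field_simp
        rw [hx] at h2
        nlinarith [h2]
      have hT'sum : ∑ m, ∑ n, T' m n = 1 := by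
        rw [Finset.sum_congr rfl fun m _ => hT'row m]; exact hμ1
      calc (∑ m, α m * μ m) + (∑ n, β n * ν n) - ε
          = ∑ m, ∑ n, ((α m + β n) * T' m n - ε * T m n) := by
            simp only [Finset.sum_sub_distrib]
            rw [sum_lin α β μ ν T' hT'row hT'col]
            simp only [← Finset.mul_sum, hTsum, mul_one]
        _ ≤ ∑ m, ∑ n, (T' m n * M m n + ε * (T' m n * (Real.log (T' m n) - 1))) :=
            Finset.sum_le_sum fun m _ => Finset.sum_le_sum fun n _ => hentry m n


/-- The partial sum `h_n(α) = ∑_m exp((α_m - M_{mn})/ε)`. -/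
def hfun (M : Matrix (Fin R1) (Fin R2) ℝ) (ε : ℝ) (α : Fin R1 → ℝ) (n : Fin R2) : ℝ :=
  ∑ m, Real.exp ((α m - M m n) / ε)

/-- The optimal dual `β` response. -/
def Bfun (M : Matrix (Fin R1) (Fin R2) ℝ) (ε : ℝ) (ν : Fin R2 → ℝ) (α : Fin R1 → ℝ)
    (n : Fin R2) : ℝ :=
  ε * Real.log (ν n / hfun M ε α n)

/-- The reduced dual function. -/
def gfun (M : Matrix (Fin R1) (Fin R2) ℝ) (ε : ℝ) (μ : Fin R1 → ℝ) (ν : Fin R2 → ℝ)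
    (α : Fin R1 → ℝ) : ℝ :=
  (∑ m, α m * μ m) + (∑ n, Bfun M ε ν α n * ν n) - ε

variable [Nonempty (Fin R1)]

lemma hfun_pos (M : Matrix (Fin R1) (Fin R2) ℝ) (ε : ℝ) (α : Fin R1 → ℝ) (n : Fin R2) :
    0 < hfun M ε α n :=
  Finset.sum_pos (fun m _ => Real.exp_pos _) Finset.univ_nonempty

lemma colsum (M : Matrix (Fin R1) (Fin R2) ℝ) {ε : ℝ} (hε : 0 < ε)
    (ν : Fin R2 → ℝ) (hνpos : ∀ n, 0 < ν n) (α : Fin R1 → ℝ) (n : Fin R2) :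
    ∑ m, Real.exp ((α m + Bfun M ε ν α n - M m n) / ε) = ν n := by
  have hh := hfun_pos M ε α n
  have hBdiv : Bfun M ε ν α n / ε = Real.log (ν n / hfun M ε α n) := by
    simp only [Bfun]
    rw [mul_div_cancel_left₀ _ hε.ne']
  have hexpB : Real.exp (Bfun M ε ν α n / ε) = ν n / hfun M ε α n := by
    rw [hBdiv, Real.exp_log (div_pos (hνpos n) hh)]
  calc ∑ m, Real.exp ((α m + Bfun M ε ν α n - M m n) / ε)
      = ∑ m, Real.exp (Bfun M ε ν α n / ε) * Real.exp ((α m - M m n) / ε) := by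
        refine Finset.sum_congr rfl fun m _ => ?_
        rw [← Real.exp_add]
        congr 1
        ring
    _ = Real.exp (Bfun M ε ν α n / ε) * hfun M ε α n := by rw [← Finset.mul_sum]; rfl
    _ = ν n := by rw [hexpB, div_mul_cancel₀ _ hh.ne']

lemma gform (M : Matrix (Fin R1) (Fin R2) ℝ) {ε : ℝ} (hε : 0 < ε)
    (μ : Fin R1 → ℝ) (ν : Fin R2 → ℝ) (hν1 : ∑ n, ν n = 1) (hνpos : ∀ n, 0 < ν n)
    (α : Fin R1 → ℝ) :
    dualObj M ε μ ν α (Bfun M ε ν α) = gfun M ε μ ν α := by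
  have h : ∑ m, ∑ n, Real.exp ((α m + Bfun M ε ν α n - M m n) / ε) = 1 := by
    rw [Finset.sum_comm, Finset.sum_congr rfl fun n _ => colsum M hε ν hνpos α n]
    exact hν1
  simp only [dualObj, gfun, h, mul_one]

lemma dual_le_g (M : Matrix (Fin R1) (Fin R2) ℝ) {ε : ℝ} (hε : 0 < ε)
    (μ : Fin R1 → ℝ) (ν : Fin R2 → ℝ) (hν1 : ∑ n, ν n = 1) (hνpos : ∀ n, 0 < ν n)
    (α : Fin R1 → ℝ) (β : Fin R2 → ℝ) :
    dualObj M ε μ ν α β ≤ gfun M ε μ ν α := by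
  have hentry : ∀ m n, ε * Real.exp ((α m + Bfun M ε ν α n - M m n) / ε)
      + (β n - Bfun M ε ν α n) * Real.exp ((α m + Bfun M ε ν α n - M m n) / ε)
      ≤ ε * Real.exp ((α m + β n - M m n) / ε) := by
    intro m n
    have h1 := exp_lin_le ((α m + Bfun M ε ν α n - M m n) / ε) ((α m + β n - M m n) / ε)
    have hyx : (α m + β n - M m n) / ε - (α m + Bfun M ε ν α n - M m n) / ε
        = (β n - Bfun M ε ν α n) / ε := by ring
    rw [hyx] at h1
    have h2 := mul_le_mul_of_nonneg_left h1 hε.le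
    have h3 : ε * (Real.exp ((α m + Bfun M ε ν α n - M m n) / ε)
          * (1 + (β n - Bfun M ε ν α n) / ε))
        = ε * Real.exp ((α m + Bfun M ε ν α n - M m n) / ε)
          + (β n - Bfun M ε ν α n) * Real.exp ((α m + Bfun M ε ν α n - M m n) / ε) := by
      field_simp
    linarith [h2, h3.le, h3.ge]
  have key : ε * 1 + ∑ n, (β n - Bfun M ε ν α n) * ν n
      ≤ ε * ∑ m, ∑ n, Real.exp ((α m + β n - M m n) / ε) := by
    calc ε * 1 + ∑ n, (β n - Bfun M ε ν α n) * ν n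
        = ∑ n, (ε * ν n + (β n - Bfun M ε ν α n) * ν n) := by
          rw [Finset.sum_add_distrib, ← Finset.mul_sum, hν1]
      _ = ∑ n, ∑ m, (ε * Real.exp ((α m + Bfun M ε ν α n - M m n) / ε)
            + (β n - Bfun M ε ν α n) * Real.exp ((α m + Bfun M ε ν α n - M m n) / ε)) := by
          refine Finset.sum_congr rfl fun n _ => ?_
          rw [Finset.sum_add_distrib, ← Finset.mul_sum, ← Finset.mul_sum,
            colsum M hε ν hνpos α n]
      _ ≤ ∑ n, ∑ m, ε * Real.exp ((α m + β n - M m n) / ε) :=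
          Finset.sum_le_sum fun n _ => Finset.sum_le_sum fun m _ => hentry m n
      _ = ε * ∑ m, ∑ n, Real.exp ((α m + β n - M m n) / ε) := by
          rw [Finset.sum_comm]
          simp [Finset.mul_sum]
  have hsplit : ∑ n, (β n - Bfun M ε ν α n) * ν n
      = (∑ n, β n * ν n) - ∑ n, Bfun M ε ν α n * ν n := by
    rw [← Finset.sum_sub_distrib]
    exact Finset.sum_congr rfl fun n _ => by ring
  simp only [dualObj, gfun]
  linarith [key, hsplit]

lemma slice_bound (M : Matrix (Fin R1) (Fin R2) ℝ) (hM : ∀ m n, 0 ≤ M m n) {ε : ℝ} (hε : 0 < ε)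
    (μ : Fin R1 → ℝ) (ν : Fin R2 → ℝ) (hν1 : ∑ n, ν n = 1)
    (hμpos : ∀ m, 0 < μ m) (hνpos : ∀ n, 0 < ν n)
    (α : Fin R1 → ℝ) (hle : ∀ m, α m ≤ 0) {m0 : Fin R1} (hm0 : α m0 = 0) (m1 : Fin R1) :
    gfun M ε μ ν α ≤ μ m1 * α m1 + (∑ m, ∑ n, M m n) := by
  set C := ∑ m, ∑ n, M m n with hCdef
  have hMC : ∀ m n, M m n ≤ C := by
    intro m n
    calc M m n ≤ ∑ n', M m n' :=
          Finset.single_le_sum (fun n' _ => hM m n') (Finset.mem_univ n)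
      _ ≤ C := Finset.single_le_sum (f := fun m' => ∑ n', M m' n')
          (fun m' _ => Finset.sum_nonneg fun n' _ => hM m' n') (Finset.mem_univ m)
  have hBle : ∀ n, Bfun M ε ν α n ≤ C := by
    intro n
    have hh := hfun_pos M ε α n
    have hsingle : Real.exp (-(M m0 n) / ε) ≤ hfun M ε α n := by
      have h := Finset.single_le_sum (f := fun m => Real.exp ((α m - M m n) / ε))
        (fun m _ => (Real.exp_pos _).le) (Finset.mem_univ m0)
      have harg : -(M m0 n) / ε = (α m0 - M m0 n) / ε := by rw [hm0]; ring
      rw [harg]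
      exact h
    have hν1' : ν n ≤ 1 := by
      rw [← hν1]
      exact Finset.single_le_sum (fun n' _ => (hνpos n').le) (Finset.mem_univ n)
    have hdivle : ν n / hfun M ε α n ≤ Real.exp (M m0 n / ε) := by
      rw [div_le_iff₀ hh]
      calc ν n ≤ 1 := hν1'
        _ = Real.exp (M m0 n / ε) * Real.exp (-(M m0 n) / ε) := by
            rw [← Real.exp_add, show M m0 n / ε + -(M m0 n) / ε = 0 by ring, Real.exp_zero]
        _ ≤ Real.exp (M m0 n / ε) * hfun M ε α n :=
            mul_le_mul_of_nonneg_left hsingle (Real.exp_pos _).le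
    have hlog : Real.log (ν n / hfun M ε α n) ≤ M m0 n / ε :=
      calc Real.log (ν n / hfun M ε α n) ≤ Real.log (Real.exp (M m0 n / ε)) :=
            Real.log_le_log (div_pos (hνpos n) hh) hdivle
        _ = M m0 n / ε := Real.log_exp _
    calc Bfun M ε ν α n = ε * Real.log (ν n / hfun M ε α n) := rfl
      _ ≤ ε * (M m0 n / ε) := mul_le_mul_of_nonneg_left hlog hε.le
      _ = M m0 n := by field_simp
      _ ≤ C := hMC m0 n
  have hsum1 : ∑ m, α m * μ m ≤ μ m1 * α m1 := by
    have hb : ∀ m ∈ Finset.univ, α m * μ m ≤ if m = m1 then α m1 * μ m1 else 0 := by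
      intro m _
      by_cases h : m = m1
      · subst h; simp
      · simp only [if_neg h]
        exact mul_nonpos_of_nonpos_of_nonneg (hle m) (hμpos m).le
    calc ∑ m, α m * μ m ≤ ∑ m, if m = m1 then α m1 * μ m1 else 0 := Finset.sum_le_sum hb
      _ = α m1 * μ m1 := by simp
      _ = μ m1 * α m1 := mul_comm _ _
  have hBsum : ∑ n, Bfun M ε ν α n * ν n ≤ C := by
    calc ∑ n, Bfun M ε ν α n * ν n ≤ ∑ n, C * ν n :=
          Finset.sum_le_sum fun n _ => mul_le_mul_of_nonneg_right (hBle n) (hνpos n).le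
      _ = C := by rw [← Finset.mul_sum, hν1, mul_one]
  simp only [gfun]
  linarith

lemma ginv (M : Matrix (Fin R1) (Fin R2) ℝ) {ε : ℝ} (hε : 0 < ε)
    (μ : Fin R1 → ℝ) (ν : Fin R2 → ℝ) (hμ1 : ∑ m, μ m = 1) (hν1 : ∑ n, ν n = 1)
    (hνpos : ∀ n, 0 < ν n) (α : Fin R1 → ℝ) (c : ℝ) :
    gfun M ε μ ν (fun m => α m - c) = gfun M ε μ ν α := by
  have hhs : ∀ n, hfun M ε (fun m => α m - c) n = Real.exp (-c / ε) * hfun M ε α n := by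
    intro n
    simp only [hfun, Finset.mul_sum]
    refine Finset.sum_congr rfl fun m _ => ?_
    rw [← Real.exp_add]
    congr 1
    ring
  have hBs : ∀ n, Bfun M ε ν (fun m => α m - c) n = Bfun M ε ν α n + c := by
    intro n
    have hh := hfun_pos M ε α n
    simp only [Bfun, hhs]
    have harg : ν n / (Real.exp (-c / ε) * hfun M ε α n)
        = (ν n / hfun M ε α n) * Real.exp (c / ε) := by
      rw [show -c / ε = -(c / ε) from neg_div ε c, Real.exp_neg]
      field_simp
    rw [harg, Real.log_mul (ne_of_gt (div_pos (hνpos n) hh)) (Real.exp_ne_zero _),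
      Real.log_exp]
    have hec : ε * (c / ε) = c := by field_simp
    rw [mul_add, hec]
  have h1 : ∑ m, (α m - c) * μ m = (∑ m, α m * μ m) - c := by
    calc ∑ m, (α m - c) * μ m = ∑ m, (α m * μ m - c * μ m) :=
          Finset.sum_congr rfl fun m _ => by ring
      _ = (∑ m, α m * μ m) - c * ∑ m, μ m := by
          rw [Finset.sum_sub_distrib, Finset.mul_sum]
      _ = _ := by rw [hμ1, mul_one]
  have h2 : ∑ n, (Bfun M ε ν α n + c) * ν n = (∑ n, Bfun M ε ν α n * ν n) + c := by
    calc ∑ n, (Bfun M ε ν α n + c) * ν n = ∑ n, (Bfun M ε ν α n * ν n + c * ν n) :=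
          Finset.sum_congr rfl fun n _ => by ring
      _ = (∑ n, Bfun M ε ν α n * ν n) + c * ∑ n, ν n := by
          rw [Finset.sum_add_distrib, Finset.mul_sum]
      _ = _ := by rw [hν1, mul_one]
  simp only [gfun, hBs]
  rw [h1, h2]
  ring

lemma gcont (M : Matrix (Fin R1) (Fin R2) ℝ) {ε : ℝ} (hε : 0 < ε)
    (μ : Fin R1 → ℝ) (ν : Fin R2 → ℝ) (hνpos : ∀ n, 0 < ν n) :
    Continuous (gfun M ε μ ν) := by
  have hhc : ∀ n, Continuous fun α : Fin R1 → ℝ => hfun M ε α n := by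
    intro n
    refine continuous_finset_sum _ fun m _ => ?_
    exact Real.continuous_exp.comp (by fun_prop : Continuous fun α : Fin R1 → ℝ => (α m - M m n) / ε)
  have hBc : ∀ n, Continuous fun α : Fin R1 → ℝ => Bfun M ε ν α n := by
    intro n
    refine continuous_const.mul ?_
    refine Continuous.log (continuous_const.div (hhc n) fun α => (hfun_pos M ε α n).ne') ?_
    exact fun α => (div_pos (hνpos n) (hfun_pos M ε α n)).ne'
  refine Continuous.sub (Continuous.add ?_ ?_) continuous_const
  · exact continuous_finset_sum _ fun m _ => (continuous_apply m).mul continuous_const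
  · exact continuous_finset_sum _ fun n _ => (hBc n).mul continuous_const


end EOTAux

section EOTMain
variable {R1 R2 : ℕ}


lemma exists_potentials (M : Matrix (Fin R1) (Fin R2) ℝ) (hM : ∀ m n, 0 ≤ M m n)
    {ε : ℝ} (hε : 0 < ε) (μ : Fin R1 → ℝ) (ν : Fin R2 → ℝ)
    (hμ1 : ∑ m, μ m = 1) (hν1 : ∑ n, ν n = 1)
    (hμpos : ∀ m, 0 < μ m) (hνpos : ∀ n, 0 < ν n) :
    ∃ (α : Fin R1 → ℝ) (β : Fin R2 → ℝ),
      (∀ m, ∑ n, Real.exp ((α m + β n - M m n) / ε) = μ m) ∧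
      (∀ n, ∑ m, Real.exp ((α m + β n - M m n) / ε) = ν n) := by
  haveI hne1 : Nonempty (Fin R1) := by
    rcases Nat.eq_zero_or_pos R1 with h | h
    · subst h; simp at hμ1
    · exact ⟨⟨0, h⟩⟩
  obtain ⟨mmin, -, hmmin⟩ := Finset.exists_mem_eq_inf' (Finset.univ_nonempty (α := Fin R1)) μ
  set μmin := Finset.univ.inf' Finset.univ_nonempty μ with hμmin_def
  have hμminpos : 0 < μmin := by rw [hmmin]; exact hμpos mmin
  have hμminle : ∀ m, μmin ≤ μ m := fun m => Finset.inf'_le _ (Finset.mem_univ m)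
  set C := ∑ m, ∑ n, M m n with hCdef
  set g := gfun M ε μ ν with hgdef
  have hg0 : g 0 ≤ C := by
    have h := slice_bound M hM hε μ ν hν1 hμpos hνpos (fun _ => (0 : ℝ))
      (fun m => le_refl 0) (m0 := Classical.arbitrary _) rfl (Classical.arbitrary _)
    simp at h; exact h
  set R := (C - g 0) / μmin + 1 with hRdef
  have hR1 : 1 ≤ R := by
    have : 0 ≤ (C - g 0) / μmin := div_nonneg (by linarith) hμminpos.le
    rw [hRdef]; linarith
  set K : Set (Fin R1 → ℝ) := Set.univ.pi (fun _ => Set.Icc (-R) 0) with hKdef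
  have hKmem : ∀ {α : Fin R1 → ℝ}, α ∈ K ↔ ∀ m, -R ≤ α m ∧ α m ≤ 0 := by
    intro α
    rw [hKdef, Set.mem_univ_pi]
    simp [Set.mem_Icc]
  have h0K : (fun _ => (0 : ℝ) : Fin R1 → ℝ) ∈ K := hKmem.mpr fun m => ⟨by linarith, le_refl _⟩
  obtain ⟨α0, hα0K, hmaxK⟩ := (isCompact_univ_pi fun _ : Fin R1 => isCompact_Icc).exists_isMaxOn
    ⟨_, h0K⟩ (gcont M hε μ ν hνpos).continuousOn
  have hmax' : ∀ α ∈ K, g α ≤ g α0 := fun α hα => isMaxOn_iff.mp hmaxK α hα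
  have hglob : ∀ α, g α ≤ g α0 := by
    intro α
    obtain ⟨i, -, hi⟩ := Finset.exists_mem_eq_sup' (Finset.univ_nonempty (α := Fin R1)) α
    set c := Finset.univ.sup' Finset.univ_nonempty α with hcdef
    have hle : ∀ m, α m - c ≤ 0 := fun m =>
      sub_nonpos.mpr (Finset.le_sup' α (Finset.mem_univ m))
    have hm0 : α i - c = 0 := sub_eq_zero.mpr hi.symm
    have hginv : g (fun m => α m - c) = g α := ginv M hε μ ν hμ1 hν1 hνpos α c
    rw [← hginv]
    by_cases hcase : ∀ m, -R ≤ α m - c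
    · exact hmax' _ (hKmem.mpr fun m => ⟨hcase m, hle m⟩)
    · push_neg at hcase
      obtain ⟨m1, hm1⟩ := hcase
      have h1 := slice_bound M hM hε μ ν hν1 hμpos hνpos (fun m => α m - c) hle hm0 m1
      have h2 : μ m1 * (α m1 - c) ≤ μmin * (α m1 - c) :=
        mul_le_mul_of_nonpos_right (hμminle m1) (hle m1)
      have h3 : μmin * (α m1 - c) ≤ μmin * (-R) :=
        mul_le_mul_of_nonneg_left hm1.le hμminpos.le
      have h4 : μmin * R = (C - g 0) + μmin := by
        rw [hRdef, mul_add, mul_one, mul_div_cancel₀ _ hμminpos.ne']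
      have h5 : g 0 ≤ g α0 := by
        have := hmax' _ h0K
        exact this
      have hgle : g (fun m => α m - c) ≤ μ m1 * (α m1 - c) + C := h1
      nlinarith [hgle, h2, h3, h4, h5, hμminpos]
  set β0 := Bfun M ε ν α0 with hβ0
  have hdmax : ∀ (α : Fin R1 → ℝ) (β : Fin R2 → ℝ),
      dualObj M ε μ ν α β ≤ dualObj M ε μ ν α0 β0 := by
    intro α β
    calc dualObj M ε μ ν α β ≤ g α := dual_le_g M hε μ ν hν1 hνpos α β
      _ ≤ g α0 := hglob α
      _ = dualObj M ε μ ν α0 β0 := (gform M hε μ ν hν1 hνpos α0).symm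
  refine ⟨α0, β0, ?_, fun n => colsum M hε ν hνpos α0 n⟩
  intro m
  set φ : ℝ → ℝ := fun t => dualObj M ε μ ν (Function.update α0 m (α0 m + t)) β0 with hφ
  have hφ0 : φ 0 = dualObj M ε μ ν α0 β0 := by
    simp [hφ]
  have hφmax : ∀ t, φ t ≤ φ 0 := fun t => by rw [hφ0]; exact hdmax _ _
  have hA : HasDerivAt (fun t => ∑ k, Function.update α0 m (α0 m + t) k * μ k) (μ m) 0 := by
    have h := HasDerivAt.fun_sum (u := Finset.univ)
      (A := fun k t => Function.update α0 m (α0 m + t) k * μ k)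
      (A' := fun k => if k = m then μ m else 0) (x := 0) ?_
    · simpa using h
    · intro k _
      by_cases hk : k = m
      · subst hk
        simp only [Function.update_self, if_pos rfl]
        simpa using ((hasDerivAt_id (0 : ℝ)).const_add (α0 k)).mul_const (μ k)
      · simp only [Function.update_of_ne hk, if_neg hk]
        exact hasDerivAt_const _ _
  have hE : HasDerivAt
      (fun t => ∑ k, ∑ n, Real.exp ((Function.update α0 m (α0 m + t) k + β0 n - M k n) / ε))
      (∑ n, ε⁻¹ * Real.exp ((α0 m + β0 n - M m n) / ε)) 0 := by
    have h := HasDerivAt.fun_sum (u := Finset.univ)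
      (A := fun k t => ∑ n, Real.exp ((Function.update α0 m (α0 m + t) k + β0 n - M k n) / ε))
      (A' := fun k => if k = m then ∑ n, ε⁻¹ * Real.exp ((α0 m + β0 n - M m n) / ε) else 0)
      (x := 0) ?_
    · simpa using h
    · intro k _
      by_cases hk : k = m
      · subst hk
        simp only [Function.update_self, if_pos rfl]
        refine HasDerivAt.fun_sum fun n _ => ?_
        have hin : HasDerivAt (fun t : ℝ => (α0 k + t + β0 n - M k n) / ε) (1 / ε) 0 := by
          simpa using
            ((((hasDerivAt_id (0 : ℝ)).const_add (α0 k)).add_const (β0 n)).sub_const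
              (M k n)).div_const ε
        have h2 := hin.exp
        refine h2.congr_deriv ?_
        rw [add_zero]
        ring
      · simp only [Function.update_of_ne hk, if_neg hk]
        exact hasDerivAt_const _ _
  have hval : ε * ∑ n, ε⁻¹ * Real.exp ((α0 m + β0 n - M m n) / ε)
      = ∑ n, Real.exp ((α0 m + β0 n - M m n) / ε) := by
    rw [Finset.mul_sum]
    exact Finset.sum_congr rfl fun n _ => by
      rw [← mul_assoc, mul_inv_cancel₀ hε.ne', one_mul]
  have hφd : HasDerivAt φ (μ m - ∑ n, Real.exp ((α0 m + β0 n - M m n) / ε)) 0 := by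
    rw [← hval]
    exact (hA.add_const (∑ n, β0 n * ν n)).sub (hE.const_mul ε)
  have hloc : IsLocalMax φ 0 :=
    (isMaxOn_iff.mpr fun t _ => hφmax t).isLocalMax Filter.univ_mem
  have hzero := hloc.hasDerivAt_eq_zero hφd
  linarith [hzero]


end EOTMain

/-- Strong duality for entropy-regularized optimal transport: the maximum of the
dual objective is attained, and this maximum value is also the minimum of the primal
objective `⟨T, M⟩ - ε H(T)` over the transport polytope (attained as well). -/
theorem entropic_ot_strong_duality {R1 R2 : ℕ}
    (M : Matrix (Fin R1) (Fin R2) ℝ) (hM : ∀ m n, 0 ≤ M m n)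
    (ε : ℝ) (hε : 0 < ε)
    (μ : Fin R1 → ℝ) (ν : Fin R2 → ℝ)
    (hμ : μ ∈ probSimplex R1) (hν : ν ∈ probSimplex R2)
    (hμpos : ∀ m, 0 < μ m) (hνpos : ∀ n, 0 < ν n) :
    ∃ (α : Fin R1 → ℝ) (β : Fin R2 → ℝ),
      (∀ (α' : Fin R1 → ℝ) (β' : Fin R2 → ℝ),
        dualObj M ε μ ν α' β' ≤ dualObj M ε μ ν α β) ∧
      IsLeast {c | ∃ T ∈ transportPolytope μ ν, c = otObj M ε T}
        (dualObj M ε μ ν α β) := by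
  obtain ⟨α, β, hrow, hcol⟩ :=
    exists_potentials M hM hε μ ν hμ.2 hν.2 hμpos hνpos
  exact ⟨α, β, conclusion_of_potentials M hε μ ν hμ.2 α β hrow hcol⟩
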